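/- Let c_0 ∈ X_{0,1}^+, assume the rate coefficients satisfy the growth condition (GB), and let c = (c_i)_{i≥0} be an admissible mild solution of the isolated DGED system with initial datum c_0. Then for all t ≥ 0, ∑_{i=0}^∞ c_i(t) = ∑_{i=0}^∞ c_{0i} and ∑_{i=0}^∞ i c_i(t) = ∑_{i=0}^∞ i c_{0i}. -/

import Mathlib

open Finset MeasureTheory

/-- Infinite-system operator `Q_{1,i}`. -/
noncomputable def Qi1 (a : ℕ → ℕ → ℕ → ℝ) (c : ℕ → ℝ) (i : ℕ) : ℝ :=
  ∑' p : ℕ × ℕ, if 1 ≤ p.1 then a (i + p.1) p.2 p.1 * c (i + p.1) * c p.2 else 0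

/-- Infinite-system operator `Q_{2,i}`. -/
noncomputable def Qi2 (a : ℕ → ℕ → ℕ → ℝ) (c : ℕ → ℝ) (i : ℕ) : ℝ :=
  -∑' p : ℕ × ℕ, if 1 ≤ p.1 ∧ p.1 ≤ p.2 then a p.2 i p.1 * c p.2 * c i else 0

/-- Infinite-system operator `Q_{3,i}` (equal to `0` when `i = 0`). -/
noncomputable def Qi3 (a : ℕ → ℕ → ℕ → ℝ) (c : ℕ → ℝ) (i : ℕ) : ℝ :=
  ∑ k ∈ Finset.Icc 1 i, ∑' j : ℕ, if k ≤ j then a j (i - k) k * c j * c (i - k) else 0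

/-- Infinite-system operator `Q_{4,i}` (equal to `0` when `i = 0`). -/
noncomputable def Qi4 (a : ℕ → ℕ → ℕ → ℝ) (c : ℕ → ℝ) (i : ℕ) : ℝ :=
  -∑ k ∈ Finset.Icc 1 i, ∑' j : ℕ, a i j k * c j * c i

/-- Summability of all the series defining the operators `Q_{j,i}`. -/
def QSummable (a : ℕ → ℕ → ℕ → ℝ) (c : ℕ → ℝ) (i : ℕ) : Prop :=
  Summable (fun p : ℕ × ℕ =>
    if 1 ≤ p.1 then a (i + p.1) p.2 p.1 * c (i + p.1) * c p.2 else 0) ∧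
  Summable (fun p : ℕ × ℕ =>
    if 1 ≤ p.1 ∧ p.1 ≤ p.2 then a p.2 i p.1 * c p.2 * c i else 0) ∧
  (∀ k ∈ Finset.Icc 1 i,
    Summable (fun j : ℕ => if k ≤ j then a j (i - k) k * c j * c (i - k) else 0)) ∧
  (∀ k ∈ Finset.Icc 1 i, Summable (fun j : ℕ => a i j k * c j * c i))

/-- `c` is a mild solution of the isolated DGED system on the set `S` with
initial datum `c0 ∈ X_{0,1}^+`. -/
def MildSolIso (a : ℕ → ℕ → ℕ → ℝ) (c0 : ℕ → ℝ) (S : Set ℝ) (c : ℕ → ℝ → ℝ) : Prop :=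
  (∀ i, c i 0 = c0 i) ∧
  (∀ t ∈ S, (∀ i, 0 ≤ c i t) ∧ Summable (fun i : ℕ => (1 + (i : ℝ)) * c i t)) ∧
  (∀ i, ContinuousOn (c i) S) ∧
  (∀ i : ℕ, ∀ t ∈ S,
    (∀ᵐ s ∂(volume.restrict (Set.Ioc 0 t)), QSummable a (fun n => c n s) i) ∧
    IntegrableOn (fun s => Qi1 a (fun n => c n s) i) (Set.Ioc 0 t) ∧
    IntegrableOn (fun s => Qi2 a (fun n => c n s) i) (Set.Ioc 0 t) ∧
    IntegrableOn (fun s => Qi3 a (fun n => c n s) i) (Set.Ioc 0 t) ∧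
    IntegrableOn (fun s => Qi4 a (fun n => c n s) i) (Set.Ioc 0 t) ∧
    c i t = c0 i + ∫ s in (0 : ℝ)..t,
      (Qi1 a (fun n => c n s) i + Qi2 a (fun n => c n s) i +
        Qi3 a (fun n => c n s) i + Qi4 a (fun n => c n s) i))

/-- `c` is a mild solution of the non-isolated DGED system on the set `S` with
initial datum `c0 ∈ X_{0,1}^+`: the concentration of `0`-clusters is constant and the
components `c_i`, `i ≥ 1`, satisfy the integral equations. -/
def MildSolNon (a : ℕ → ℕ → ℕ → ℝ) (c0 : ℕ → ℝ) (S : Set ℝ) (c : ℕ → ℝ → ℝ) : Prop :=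
  (∀ i, c i 0 = c0 i) ∧
  (∀ t ∈ S, (∀ i, 0 ≤ c i t) ∧ Summable (fun i : ℕ => (1 + (i : ℝ)) * c i t)) ∧
  (∀ i, ContinuousOn (c i) S) ∧
  (∀ t ∈ S, c 0 t = c0 0) ∧
  (∀ i : ℕ, 1 ≤ i → ∀ t ∈ S,
    (∀ᵐ s ∂(volume.restrict (Set.Ioc 0 t)), QSummable a (fun n => c n s) i) ∧
    IntegrableOn (fun s => Qi1 a (fun n => c n s) i) (Set.Ioc 0 t) ∧
    IntegrableOn (fun s => Qi2 a (fun n => c n s) i) (Set.Ioc 0 t) ∧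
    IntegrableOn (fun s => Qi3 a (fun n => c n s) i) (Set.Ioc 0 t) ∧
    IntegrableOn (fun s => Qi4 a (fun n => c n s) i) (Set.Ioc 0 t) ∧
    c i t = c0 i + ∫ s in (0 : ℝ)..t,
      (Qi1 a (fun n => c n s) i + Qi2 a (fun n => c n s) i +
        Qi3 a (fun n => c n s) i + Qi4 a (fun n => c n s) i))

/-- Growth condition (GB) on the rate coefficients. -/
def GB (a : ℕ → ℕ → ℕ → ℝ) (C Q : ℝ) (q : ℕ → ℕ → ℝ) : Prop :=
  1 ≤ C ∧ 1 ≤ Q ∧ (∀ i k, 0 ≤ q i k) ∧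
  (∀ i : ℕ, 1 ≤ i →
    ∑ k ∈ Finset.Icc 1 i, (k : ℝ) * ((i : ℝ) - k + 1) * q i k ≤ Q * i) ∧
  (∀ i j k : ℕ, 1 ≤ k → k ≤ i → 1 ≤ j →
    a i j k ≤ C * ((i : ℝ) - k + 1) * ((j : ℝ) + k) * q i k)

open Finset

/-- Truncated operator `Q^N_{1,i}`. -/
noncomputable def QN1 (a : ℕ → ℕ → ℕ → ℝ) (N : ℕ) (c : ℕ → ℝ) (i : ℕ) : ℝ :=
  ∑ k ∈ Finset.Icc 1 (N - i), ∑ j ∈ Finset.Icc 0 (N - k), a (i + k) j k * c (i + k) * c j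

/-- Truncated operator `Q^N_{2,i}`. -/
noncomputable def QN2 (a : ℕ → ℕ → ℕ → ℝ) (N : ℕ) (c : ℕ → ℝ) (i : ℕ) : ℝ :=
  -∑ k ∈ Finset.Icc 1 (N - i), ∑ j ∈ Finset.Icc k N, a j i k * c j * c i

/-- Truncated operator `Q^N_{3,i}`. -/
noncomputable def QN3 (a : ℕ → ℕ → ℕ → ℝ) (N : ℕ) (c : ℕ → ℝ) (i : ℕ) : ℝ :=
  ∑ k ∈ Finset.Icc 1 i, ∑ j ∈ Finset.Icc k N, a j (i - k) k * c j * c (i - k)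

/-- Truncated operator `Q^N_{4,i}`. -/
noncomputable def QN4 (a : ℕ → ℕ → ℕ → ℝ) (N : ℕ) (c : ℕ → ℝ) (i : ℕ) : ℝ :=
  -∑ k ∈ Finset.Icc 1 i, ∑ j ∈ Finset.Icc 0 (N - k), a i j k * c j * c i

/-- `c` is a solution of the `N`-truncated isolated DGED system on the set `I`. -/
def IsTruncSolIso (a : ℕ → ℕ → ℕ → ℝ) (N : ℕ) (I : Set ℝ) (c : ℕ → ℝ → ℝ) : Prop :=
  ∀ t ∈ I,
    HasDerivAt (c 0) (QN1 a N (fun n => c n t) 0 + QN2 a N (fun n => c n t) 0) t ∧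
    (∀ i, 1 ≤ i → i ≤ N - 1 →
      HasDerivAt (c i)
        (QN1 a N (fun n => c n t) i + QN2 a N (fun n => c n t) i +
          QN3 a N (fun n => c n t) i + QN4 a N (fun n => c n t) i) t) ∧
    HasDerivAt (c N) (QN3 a N (fun n => c n t) N + QN4 a N (fun n => c n t) N) t


/-- Admissibility: `c` is a pointwise limit of nonnegative solutions of truncated
isolated systems with the same initial data (extended by zero above the truncation). -/
def AdmissibleIso (a : ℕ → ℕ → ℕ → ℝ) (c0 : ℕ → ℝ) (c : ℕ → ℝ → ℝ) : Prop :=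
  ∃ (Nm : ℕ → ℕ) (cN : ℕ → ℕ → ℝ → ℝ), StrictMono Nm ∧
    (∀ m, 2 ≤ Nm m) ∧
    (∀ m, IsTruncSolIso a (Nm m) (Set.Ici 0) (cN m)) ∧
    (∀ m, ∀ i, i ≤ Nm m → cN m i 0 = c0 i) ∧
    (∀ m, ∀ i, Nm m < i → ∀ t : ℝ, cN m i t = 0) ∧
    (∀ m, ∀ i, i ≤ Nm m → ∀ t : ℝ, 0 ≤ t → 0 ≤ cN m i t) ∧
    (∀ i : ℕ, ∀ t : ℝ, 0 ≤ t →
      Filter.Tendsto (fun m => cN m i t) Filter.atTop (nhds (c i t)))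


section AuxConservation
open Filter

noncomputable def gP (R x : ℝ) : ℝ := if x ≤ R then x^2 else R*(2*x - R)

lemma gP_nonneg {R x : ℝ} (hR : 0 ≤ R) (hx : 0 ≤ x) : 0 ≤ gP R x := by
  unfold gP; split_ifs with h <;> nlinarith

lemma gP_zero {R : ℝ} (hR : 0 ≤ R) : gP R 0 = 0 := by simp [gP, hR]

lemma gP_mono {R x y : ℝ} (hR : 0 ≤ R) (hx : 0 ≤ x) (hxy : x ≤ y) : gP R x ≤ gP R y := by
  unfold gP; split_ifs with h1 h2 h2 <;> nlinarith

lemma gP_superadd {R x y : ℝ} (hR : 0 ≤ R) (hx : 0 ≤ x) (hy : 0 ≤ y) :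
    gP R x + gP R y ≤ gP R (x+y) := by
  unfold gP; split_ifs with h1 h2 h3 h2 h3 h3 <;>
    nlinarith [mul_nonneg hx hy, sq_nonneg (x+y-R), sq_nonneg (R-x), sq_nonneg (R-y)]

lemma gP_lip {R x k : ℝ} (hR : 0 ≤ R) (hx : 0 ≤ x) (hk : 0 ≤ k) :
    gP R (x+k) - gP R x ≤ 2*R*k := by
  unfold gP; split_ifs with h1 h2 h2 <;> nlinarith [sq_nonneg (R-x)]

lemma gP_W {R x y : ℝ} (hR : 0 ≤ R) (hx : 0 ≤ x) (hy : 0 ≤ y) :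
    gP R (x+y) - gP R x - gP R y ≤ 2*x*y := by
  unfold gP; split_ifs with h1 h2 h3 h2 h3 h3 <;>
    nlinarith [sq_nonneg (x+y-R), mul_nonneg hx hy]

lemma gP_lower {R x : ℝ} (hR : 0 ≤ R) (hx : 0 ≤ x) : x * min R x ≤ gP R x := by
  unfold gP; split_ifs with h
  · rw [min_eq_right h]; nlinarith
  · rw [min_eq_left (le_of_lt (lt_of_not_ge h))]; nlinarith [lt_of_not_ge h]

lemma gP_upper {R x : ℝ} (hR : 0 ≤ R) (hx : 0 ≤ x) : gP R x ≤ 2 * (x * min R x) := by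
  unfold gP; split_ifs with h
  · rw [min_eq_right h]; nlinarith
  · rw [min_eq_left (le_of_lt (lt_of_not_ge h))]; nlinarith [lt_of_not_ge h]

lemma gP_ge {R x : ℝ} (hR : 0 ≤ R) (hx : R ≤ x) : R * x ≤ gP R x := by
  unfold gP; split_ifs with h <;> nlinarith

lemma gP_delta {R k p j : ℝ} (hR : 0 ≤ R) (h1 : 1 ≤ k) (hkp : k ≤ p) (hj : 0 ≤ j) :
    (gP R (p-k) + gP R (j+k) - gP R p - gP R j) * (j+k)
      ≤ 4*k*(j*(min R j + min R p)) := by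
  have hk0 : (0:ℝ) ≤ k := by linarith
  have hp0 : (0:ℝ) ≤ p := by linarith
  have hpk : (0:ℝ) ≤ p - k := by linarith
  set W := gP R (j+k) - gP R j - gP R k with hWdef
  have hΔW : gP R (p-k) + gP R (j+k) - gP R p - gP R j ≤ W := by
    have := gP_superadd hR hpk hk0
    rw [sub_add_cancel] at this
    simp only [hWdef]; linarith
  have hminj : (0:ℝ) ≤ min R j := le_min hR hj
  have hminp : (0:ℝ) ≤ min R p := le_min hR hp0
  have hjk0 : (0:ℝ) ≤ j + k := by linarith
  rcases le_or_gt W 0 with hW | hW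
  · have : (gP R (p-k) + gP R (j+k) - gP R p - gP R j) * (j+k) ≤ 0 :=
      mul_nonpos_of_nonpos_of_nonneg (le_trans hΔW hW) hjk0
    have : (0:ℝ) ≤ 4*k*(j*(min R j + min R p)) := by positivity
    linarith
  · have hA : W ≤ 2*k*min R j := by
      rcases le_total R j with h | h
      · rw [min_eq_left h]
        have := gP_lip hR hj hk0
        have := gP_nonneg hR hk0
        simp only [hWdef]; nlinarith
      · rw [min_eq_right h]
        have h2 := gP_W hR hj hk0
        simp only [hWdef]; nlinarith
    have hB : W ≤ 2*j*min R p := by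
      have hBk : W ≤ 2*j*min R k := by
        rcases le_total R k with h | h
        · rw [min_eq_left h]
          have h2 := gP_lip hR hk0 hj
          have h3 := gP_nonneg hR hj
          have : gP R (k + j) = gP R (j + k) := by rw [add_comm]
          simp only [hWdef]; nlinarith
        · rw [min_eq_right h]
          have h2 := gP_W hR hj hk0
          simp only [hWdef]; nlinarith
      have : min R k ≤ min R p := min_le_min le_rfl hkp
      nlinarith
    have hstep : (gP R (p-k) + gP R (j+k) - gP R p - gP R j) * (j+k) ≤ W * (j+k) :=
      mul_le_mul_of_nonneg_right hΔW hjk0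
    rcases le_total k j with h | h
    · have : W * (j+k) ≤ W * (2*j) := by nlinarith
      have : W * (2*j) ≤ (2*k*min R j) * (2*j) := by nlinarith
      nlinarith
    · have : W * (j+k) ≤ W * (2*k) := by nlinarith
      have : W * (2*k) ≤ (2*j*min R p) * (2*k) := by nlinarith
      nlinarith

lemma swapA {M : Type*} [AddCommMonoid M] (N : ℕ) (f : ℕ → ℕ → M) :
    ∑ i ∈ range (N+1), ∑ k ∈ Icc 1 (N-i), f i k
      = ∑ k ∈ Icc 1 N, ∑ i ∈ Icc 0 (N-k), f i k :=
  Finset.sum_comm' (by intro i k; simp only [Finset.mem_range, Finset.mem_Icc]; omega)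

lemma swapB {M : Type*} [AddCommMonoid M] (N : ℕ) (f : ℕ → ℕ → M) :
    ∑ i ∈ range (N+1), ∑ k ∈ Icc 1 i, f i k
      = ∑ k ∈ Icc 1 N, ∑ i ∈ Icc k N, f i k :=
  Finset.sum_comm' (by intro i k; simp only [Finset.mem_range, Finset.mem_Icc]; omega)

lemma IccMap {k N : ℕ} (hk : k ≤ N) :
    Finset.Icc k N = Finset.map (addLeftEmbedding k) (Finset.Icc 0 (N-k)) := by
  rw [Finset.map_add_left_Icc]
  congr 1 <;> omega

lemma L1 (a : ℕ → ℕ → ℕ → ℝ) (w : ℕ → ℝ) (N : ℕ) (c : ℕ → ℝ) :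
    ∑ i ∈ range (N+1), w i * QN1 a N c i
      = ∑ k ∈ Icc 1 N, ∑ p ∈ Icc k N, ∑ j ∈ Icc 0 (N-k),
          a p j k * c p * c j * w (p-k) := by
  have h1 : ∀ i, w i * QN1 a N c i
      = ∑ k ∈ Icc 1 (N-i), ∑ j ∈ Icc 0 (N-k), w i * (a (i+k) j k * c (i+k) * c j) := by
    intro i; unfold QN1; rw [Finset.mul_sum]
    exact Finset.sum_congr rfl fun k _ => by rw [Finset.mul_sum]
  simp only [h1]
  rw [swapA]
  refine Finset.sum_congr rfl fun k hk => ?_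
  rw [IccMap (Finset.mem_Icc.mp hk).2, Finset.sum_map]
  refine Finset.sum_congr rfl fun i hi => ?_
  refine Finset.sum_congr rfl fun j hj => ?_
  simp only [addLeftEmbedding_apply]
  rw [Nat.add_sub_cancel_left, Nat.add_comm k i]
  ring

lemma L2 (a : ℕ → ℕ → ℕ → ℝ) (w : ℕ → ℝ) (N : ℕ) (c : ℕ → ℝ) :
    ∑ i ∈ range (N+1), w i * QN2 a N c i
      = ∑ k ∈ Icc 1 N, ∑ p ∈ Icc k N, ∑ j ∈ Icc 0 (N-k),
          -(a p j k * c p * c j * w j) := by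
  have h1 : ∀ i, w i * QN2 a N c i
      = ∑ k ∈ Icc 1 (N-i), ∑ j ∈ Icc k N, -(w i * (a j i k * c j * c i)) := by
    intro i; unfold QN2
    rw [mul_neg, Finset.mul_sum, ← Finset.sum_neg_distrib]
    refine Finset.sum_congr rfl fun k _ => ?_
    rw [Finset.mul_sum, ← Finset.sum_neg_distrib]
  simp only [h1]
  rw [swapA]
  refine Finset.sum_congr rfl fun k hk => ?_
  rw [Finset.sum_comm]
  refine Finset.sum_congr rfl fun p hp => Finset.sum_congr rfl fun j hj => ?_
  ring

lemma L3 (a : ℕ → ℕ → ℕ → ℝ) (w : ℕ → ℝ) (N : ℕ) (c : ℕ → ℝ) :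
    ∑ i ∈ range (N+1), w i * QN3 a N c i
      = ∑ k ∈ Icc 1 N, ∑ p ∈ Icc k N, ∑ j ∈ Icc 0 (N-k),
          a p j k * c p * c j * w (j+k) := by
  have h1 : ∀ i, w i * QN3 a N c i
      = ∑ k ∈ Icc 1 i, ∑ j ∈ Icc k N, w i * (a j (i-k) k * c j * c (i-k)) := by
    intro i; unfold QN3; rw [Finset.mul_sum]
    exact Finset.sum_congr rfl fun k _ => by rw [Finset.mul_sum]
  simp only [h1]
  rw [swapB]
  refine Finset.sum_congr rfl fun k hk => ?_
  rw [IccMap (Finset.mem_Icc.mp hk).2, Finset.sum_map, Finset.sum_comm]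
  refine Finset.sum_congr rfl fun p hp => Finset.sum_congr rfl fun m hm => ?_
  simp only [addLeftEmbedding_apply]
  rw [Nat.add_sub_cancel_left, Nat.add_comm k m]
  ring

lemma L4 (a : ℕ → ℕ → ℕ → ℝ) (w : ℕ → ℝ) (N : ℕ) (c : ℕ → ℝ) :
    ∑ i ∈ range (N+1), w i * QN4 a N c i
      = ∑ k ∈ Icc 1 N, ∑ p ∈ Icc k N, ∑ j ∈ Icc 0 (N-k),
          -(a p j k * c p * c j * w p) := by
  have h1 : ∀ i, w i * QN4 a N c i
      = ∑ k ∈ Icc 1 i, ∑ j ∈ Icc 0 (N-k), -(w i * (a i j k * c j * c i)) := by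
    intro i; unfold QN4
    rw [mul_neg, Finset.mul_sum, ← Finset.sum_neg_distrib]
    refine Finset.sum_congr rfl fun k _ => ?_
    rw [Finset.mul_sum, ← Finset.sum_neg_distrib]
  simp only [h1]
  rw [swapB]
  refine Finset.sum_congr rfl fun k hk => ?_
  refine Finset.sum_congr rfl fun p hp => Finset.sum_congr rfl fun j hj => ?_
  ring

lemma key_identity (a : ℕ → ℕ → ℕ → ℝ) (w : ℕ → ℝ) (N : ℕ) (c : ℕ → ℝ) :
    ∑ i ∈ range (N+1), w i * (QN1 a N c i + QN2 a N c i + QN3 a N c i + QN4 a N c i)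
      = ∑ k ∈ Icc 1 N, ∑ p ∈ Icc k N, ∑ j ∈ Icc 0 (N-k),
          a p j k * c p * c j * (w (p-k) + w (j+k) - w p - w j) := by
  have : ∀ i ∈ range (N+1), w i * (QN1 a N c i + QN2 a N c i + QN3 a N c i + QN4 a N c i)
      = w i * QN1 a N c i + w i * QN2 a N c i + w i * QN3 a N c i + w i * QN4 a N c i :=
    fun i _ => by ring
  rw [Finset.sum_congr rfl this]
  rw [Finset.sum_add_distrib, Finset.sum_add_distrib, Finset.sum_add_distrib,
    L1, L2, L3, L4]
  rw [← Finset.sum_add_distrib, ← Finset.sum_add_distrib, ← Finset.sum_add_distrib]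
  refine Finset.sum_congr rfl fun k hk => ?_
  rw [← Finset.sum_add_distrib, ← Finset.sum_add_distrib, ← Finset.sum_add_distrib]
  refine Finset.sum_congr rfl fun p hp => ?_
  rw [← Finset.sum_add_distrib, ← Finset.sum_add_distrib, ← Finset.sum_add_distrib]
  exact Finset.sum_congr rfl fun j hj => by ring

lemma hIccRange (N : ℕ) : Finset.Icc 0 N = Finset.range (N+1) := by
  rw [← Finset.Ico_add_one_right_eq_Icc, Finset.range_eq_Ico]

lemma core_est (a : ℕ → ℕ → ℕ → ℝ) (ha : ∀ i j k, 0 ≤ a i j k)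
    {C Q : ℝ} {q : ℕ → ℕ → ℝ} (hGB : GB a C Q q)
    (N : ℕ) (R : ℝ) (hR : 1 ≤ R) (c : ℕ → ℝ) (hc : ∀ i, 0 ≤ c i) :
    ∑ k ∈ Icc 1 N, ∑ p ∈ Icc k N, ∑ j ∈ Icc 0 (N-k),
        a p j k * c p * c j *
          (gP R ((p-k : ℕ) : ℝ) + gP R ((j+k : ℕ) : ℝ) - gP R (p : ℝ) - gP R (j : ℝ))
      ≤ 8*C*Q*(∑ i ∈ Icc 0 N, (i:ℝ) * c i) * (∑ i ∈ Icc 0 N, gP R (i:ℝ) * c i) := by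
  obtain ⟨hC, hQ, hq, hQsum, hab⟩ := hGB
  have hR0 : (0:ℝ) ≤ R := by linarith
  have hC0 : (0:ℝ) ≤ C := by linarith
  have hQ0 : (0:ℝ) ≤ Q := by linarith
  set M1 := ∑ i ∈ Icc 0 N, (i:ℝ) * c i with hM1def
  set F := ∑ i ∈ Icc 0 N, gP R (i:ℝ) * c i with hFdef
  have hM1 : 0 ≤ M1 := Finset.sum_nonneg fun i _ => mul_nonneg (by positivity) (hc i)
  have hF : 0 ≤ F := Finset.sum_nonneg fun i _ =>
    mul_nonneg (gP_nonneg hR0 (by positivity)) (hc i)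
  -- the pointwise upper bound
  set TT : ℕ → ℕ → ℕ → ℝ := fun k p j =>
    ((k:ℝ)*((p:ℝ)-k+1)*q p k) * (4*C*(c p * (c j * ((j:ℝ)*(min R (j:ℝ) + min R (p:ℝ))))))
    with hTTdef
  have hTTnn : ∀ k p j, 1 ≤ k → k ≤ p → 0 ≤ TT k p j := by
    intro k p j hk hkp
    have h1 : (0:ℝ) ≤ (p:ℝ) - k + 1 := by
      have : (k:ℝ) ≤ p := by exact_mod_cast hkp
      linarith
    have h2 : (0:ℝ) ≤ min R (j:ℝ) := le_min hR0 (by positivity)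
    have h3 : (0:ℝ) ≤ min R (p:ℝ) := le_min hR0 (by positivity)
    have := hq p k
    have := hc p; have := hc j
    positivity
  have hpoint : ∀ k ∈ Icc 1 N, ∀ p ∈ Icc k N, ∀ j ∈ Icc 0 (N-k),
      a p j k * c p * c j *
          (gP R ((p-k : ℕ) : ℝ) + gP R ((j+k : ℕ) : ℝ) - gP R (p : ℝ) - gP R (j : ℝ))
        ≤ TT k p j := by
    intro k hk p hp j hj
    have hk1 : 1 ≤ k := (Finset.mem_Icc.mp hk).1
    have hkp : k ≤ p := (Finset.mem_Icc.mp hp).1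
    have hk1' : (1:ℝ) ≤ (k:ℝ) := by exact_mod_cast hk1
    have hkp' : (k:ℝ) ≤ (p:ℝ) := by exact_mod_cast hkp
    have hcastpk : ((p-k : ℕ) : ℝ) = (p:ℝ) - (k:ℝ) := by
      rw [Nat.cast_sub hkp]
    have hcastjk : ((j+k : ℕ) : ℝ) = (j:ℝ) + (k:ℝ) := by push_cast; ring
    set Δ : ℝ := gP R ((p-k : ℕ) : ℝ) + gP R ((j+k : ℕ) : ℝ) - gP R (p : ℝ) - gP R (j : ℝ)
      with hΔdef
    have hΔW : Δ * ((j:ℝ)+k) ≤ 4*(k:ℝ)*((j:ℝ)*(min R (j:ℝ) + min R (p:ℝ))) := by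
      rw [hΔdef, hcastpk, hcastjk]
      exact gP_delta hR0 hk1' hkp' (by positivity)
    rcases le_or_gt Δ 0 with hΔ | hΔ
    · have hle : a p j k * c p * c j * Δ ≤ 0 :=
        mul_nonpos_of_nonneg_of_nonpos
          (by have := ha p j k; have := hc p; have := hc j; positivity) hΔ
      exact le_trans hle (hTTnn k p j hk1 hkp)
    · rcases Nat.eq_zero_or_pos j with hj0 | hj1
      · exfalso
        subst hj0
        have h1 : gP R ((p-k : ℕ) : ℝ) + gP R (k:ℝ) ≤ gP R (p:ℝ) := by
          have := gP_superadd (x := ((p-k : ℕ) : ℝ)) (y := (k:ℝ)) hR0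
            (by positivity) (by positivity)
          rw [hcastpk] at this ⊢
          simpa [sub_add_cancel] using this
        rw [hΔdef] at hΔ
        simp only [Nat.zero_add, Nat.cast_zero] at hΔ
        rw [gP_zero hR0] at hΔ
        linarith
      · have hj1' : 1 ≤ j := hj1
        have hA : a p j k ≤ C * ((p:ℝ) - k + 1) * ((j:ℝ) + k) * q p k :=
          hab p j k hk1 hkp hj1'
        have h5 : (0:ℝ) ≤ C*((p:ℝ)-k+1)*q p k * (c p * c j) := by
          have h1 : (0:ℝ) ≤ (p:ℝ) - k + 1 := by linarith
          have := hq p k; have := hc p; have := hc j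
          positivity
        calc a p j k * c p * c j * Δ
            ≤ (C * ((p:ℝ) - k + 1) * ((j:ℝ) + k) * q p k) * c p * c j * Δ := by
              apply mul_le_mul_of_nonneg_right _ (le_of_lt hΔ)
              exact mul_le_mul_of_nonneg_right
                (mul_le_mul_of_nonneg_right hA (hc p)) (hc j)
          _ = (C*((p:ℝ)-k+1)*q p k * (c p * c j)) * (Δ * ((j:ℝ)+k)) := by ring
          _ ≤ (C*((p:ℝ)-k+1)*q p k * (c p * c j))
                * (4*(k:ℝ)*((j:ℝ)*(min R (j:ℝ) + min R (p:ℝ)))) :=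
              mul_le_mul_of_nonneg_left hΔW h5
          _ = TT k p j := by rw [hTTdef]; ring
  -- sum the pointwise bound
  have hsum1 : ∑ k ∈ Icc 1 N, ∑ p ∈ Icc k N, ∑ j ∈ Icc 0 (N-k),
      a p j k * c p * c j *
        (gP R ((p-k : ℕ) : ℝ) + gP R ((j+k : ℕ) : ℝ) - gP R (p : ℝ) - gP R (j : ℝ))
      ≤ ∑ k ∈ Icc 1 N, ∑ p ∈ Icc k N, ∑ j ∈ Icc 0 N, TT k p j := by
    apply Finset.sum_le_sum; intro k hk
    apply Finset.sum_le_sum; intro p hp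
    have hk1 : 1 ≤ k := (Finset.mem_Icc.mp hk).1
    have hkp : k ≤ p := (Finset.mem_Icc.mp hp).1
    calc ∑ j ∈ Icc 0 (N-k), a p j k * c p * c j *
          (gP R ((p-k : ℕ) : ℝ) + gP R ((j+k : ℕ) : ℝ) - gP R (p : ℝ) - gP R (j : ℝ))
        ≤ ∑ j ∈ Icc 0 (N-k), TT k p j :=
          Finset.sum_le_sum fun j hj => hpoint k hk p hp j hj
      _ ≤ ∑ j ∈ Icc 0 N, TT k p j := by
          apply Finset.sum_le_sum_of_subset_of_nonneg
          · exact Finset.Icc_subset_Icc le_rfl (Nat.sub_le N k)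
          · intro j _ _; exact hTTnn k p j hk1 hkp
  -- swap the (k,p) sums
  have hswap : ∑ k ∈ Icc 1 N, ∑ p ∈ Icc k N, ∑ j ∈ Icc 0 N, TT k p j
      = ∑ p ∈ Icc 1 N, ∑ k ∈ Icc 1 p, ∑ j ∈ Icc 0 N, TT k p j :=
    Finset.sum_comm' (by intro k p; simp only [Finset.mem_Icc]; omega)
  -- bound the k-sum using (GB)
  have hinner : ∀ p ∈ Icc 1 N, ∑ k ∈ Icc 1 p, ∑ j ∈ Icc 0 N, TT k p j
      ≤ (Q*(p:ℝ)) * (4*C*(c p * (F + M1 * min R (p:ℝ)))) := by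
    intro p hp
    have hp1 : 1 ≤ p := (Finset.mem_Icc.mp hp).1
    have hSj : ∑ j ∈ Icc 0 N, c j * ((j:ℝ)*(min R (j:ℝ) + min R (p:ℝ)))
        ≤ F + M1 * min R (p:ℝ) := by
      have hsplit : ∀ j, c j * ((j:ℝ)*(min R (j:ℝ) + min R (p:ℝ)))
          = ((j:ℝ) * min R (j:ℝ)) * c j + ((j:ℝ) * c j) * min R (p:ℝ) := by
        intro j; ring
      rw [Finset.sum_congr rfl fun j _ => hsplit j, Finset.sum_add_distrib,
        ← Finset.sum_mul]
      have h1 : ∑ j ∈ Icc 0 N, ((j:ℝ) * min R (j:ℝ)) * c j ≤ F := by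
        apply Finset.sum_le_sum; intro j _
        exact mul_le_mul_of_nonneg_right (gP_lower hR0 (by positivity)) (hc j)
      have h2 : (∑ j ∈ Icc 0 N, (j:ℝ) * c j) * min R (p:ℝ) ≤ M1 * min R (p:ℝ) :=
        le_of_eq rfl
      linarith
    have hfac : ∑ k ∈ Icc 1 p, ∑ j ∈ Icc 0 N, TT k p j
        = (∑ k ∈ Icc 1 p, (k:ℝ)*((p:ℝ)-k+1)*q p k)
            * (4*C*(c p * (∑ j ∈ Icc 0 N, c j * ((j:ℝ)*(min R (j:ℝ) + min R (p:ℝ)))))) := by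
      rw [Finset.sum_mul]
      refine Finset.sum_congr rfl fun k _ => ?_
      rw [hTTdef]
      rw [← Finset.mul_sum, ← Finset.mul_sum, ← Finset.mul_sum]
    rw [hfac]
    have hqk : ∑ k ∈ Icc 1 p, (k:ℝ)*((p:ℝ)-k+1)*q p k ≤ Q*(p:ℝ) := hQsum p hp1
    have hx : (0:ℝ) ≤ 4*C*(c p * (∑ j ∈ Icc 0 N, c j * ((j:ℝ)*(min R (j:ℝ) + min R (p:ℝ))))) := by
      have : (0:ℝ) ≤ ∑ j ∈ Icc 0 N, c j * ((j:ℝ)*(min R (j:ℝ) + min R (p:ℝ))) := by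
        apply Finset.sum_nonneg; intro j _
        have h2 : (0:ℝ) ≤ min R (j:ℝ) := le_min hR0 (by positivity)
        have h3 : (0:ℝ) ≤ min R (p:ℝ) := le_min hR0 (by positivity)
        have := hc j; positivity
      have := hc p; positivity
    calc (∑ k ∈ Icc 1 p, (k:ℝ)*((p:ℝ)-k+1)*q p k)
            * (4*C*(c p * (∑ j ∈ Icc 0 N, c j * ((j:ℝ)*(min R (j:ℝ) + min R (p:ℝ))))))
        ≤ (Q*(p:ℝ)) * (4*C*(c p * (∑ j ∈ Icc 0 N, c j * ((j:ℝ)*(min R (j:ℝ) + min R (p:ℝ)))))) :=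
          mul_le_mul_of_nonneg_right hqk hx
      _ ≤ (Q*(p:ℝ)) * (4*C*(c p * (F + M1 * min R (p:ℝ)))) := by
          apply mul_le_mul_of_nonneg_left _ (by positivity)
          apply mul_le_mul_of_nonneg_left _ (by positivity)
          exact mul_le_mul_of_nonneg_left hSj (hc p)
  -- assemble
  have hfinal : ∑ p ∈ Icc 1 N, (Q*(p:ℝ)) * (4*C*(c p * (F + M1 * min R (p:ℝ))))
      ≤ 8*C*Q*M1*F := by
    have hexp : ∀ p : ℕ, (Q*(p:ℝ)) * (4*C*(c p * (F + M1 * min R (p:ℝ))))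
        = (4*C*Q*F)*((p:ℝ)*c p) + (4*C*Q*M1)*(((p:ℝ)*min R (p:ℝ))*c p) := by
      intro p; ring
    rw [Finset.sum_congr rfl fun p _ => hexp p, Finset.sum_add_distrib,
      ← Finset.mul_sum, ← Finset.mul_sum]
    have hA : ∑ p ∈ Icc 1 N, (p:ℝ)*c p ≤ M1 := by
      apply Finset.sum_le_sum_of_subset_of_nonneg (Finset.Icc_subset_Icc (Nat.zero_le 1) le_rfl)
      intro p _ _; exact mul_nonneg (by positivity) (hc p)
    have hB : ∑ p ∈ Icc 1 N, ((p:ℝ)*min R (p:ℝ))*c p ≤ F := by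
      calc ∑ p ∈ Icc 1 N, ((p:ℝ)*min R (p:ℝ))*c p
          ≤ ∑ p ∈ Icc 1 N, gP R (p:ℝ) * c p :=
            Finset.sum_le_sum fun p _ =>
              mul_le_mul_of_nonneg_right (gP_lower hR0 (by positivity)) (hc p)
        _ ≤ F := by
            apply Finset.sum_le_sum_of_subset_of_nonneg
              (Finset.Icc_subset_Icc (Nat.zero_le 1) le_rfl)
            intro p _ _; exact mul_nonneg (gP_nonneg hR0 (by positivity)) (hc p)
    nlinarith [mul_le_mul_of_nonneg_left hA (by positivity : (0:ℝ) ≤ 4*C*Q*F),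
      mul_le_mul_of_nonneg_left hB (by positivity : (0:ℝ) ≤ 4*C*Q*M1)]
  calc _ ≤ ∑ k ∈ Icc 1 N, ∑ p ∈ Icc k N, ∑ j ∈ Icc 0 N, TT k p j := hsum1
    _ = ∑ p ∈ Icc 1 N, ∑ k ∈ Icc 1 p, ∑ j ∈ Icc 0 N, TT k p j := hswap
    _ ≤ ∑ p ∈ Icc 1 N, (Q*(p:ℝ)) * (4*C*(c p * (F + M1 * min R (p:ℝ)))) :=
        Finset.sum_le_sum hinner
    _ ≤ 8*C*Q*M1*F := hfinal
    _ = 8*C*Q*M1*F := rfl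

lemma Icc10 : Finset.Icc 1 0 = (∅ : Finset ℕ) := rfl

lemma QN3_zero (a : ℕ → ℕ → ℕ → ℝ) (N : ℕ) (c : ℕ → ℝ) : QN3 a N c 0 = 0 := by
  simp [QN3, Icc10]
lemma QN4_zero (a : ℕ → ℕ → ℕ → ℝ) (N : ℕ) (c : ℕ → ℝ) : QN4 a N c 0 = 0 := by
  simp [QN4, Icc10]
lemma QN1_top (a : ℕ → ℕ → ℕ → ℝ) (N : ℕ) (c : ℕ → ℝ) : QN1 a N c N = 0 := by
  simp [QN1, Nat.sub_self, Icc10]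
lemma QN2_top (a : ℕ → ℕ → ℕ → ℝ) (N : ℕ) (c : ℕ → ℝ) : QN2 a N c N = 0 := by
  simp [QN2, Nat.sub_self, Icc10]

lemma trunc_deriv_all {a : ℕ → ℕ → ℕ → ℝ} {N : ℕ} {cN : ℕ → ℝ → ℝ}
    (h : IsTruncSolIso a N (Set.Ici 0) cN) {t : ℝ} (ht : 0 ≤ t)
    {i : ℕ} (hi : i ≤ N) :
    HasDerivAt (cN i)
      (QN1 a N (fun n => cN n t) i + QN2 a N (fun n => cN n t) i +
        QN3 a N (fun n => cN n t) i + QN4 a N (fun n => cN n t) i) t := by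
  obtain ⟨h0, hmid, htop⟩ := h t ht
  rcases Nat.eq_zero_or_pos i with rfl | hi1
  · have := h0
    rw [show QN1 a N (fun n => cN n t) 0 + QN2 a N (fun n => cN n t) 0
        = QN1 a N (fun n => cN n t) 0 + QN2 a N (fun n => cN n t) 0 +
          QN3 a N (fun n => cN n t) 0 + QN4 a N (fun n => cN n t) 0 by
      rw [QN3_zero, QN4_zero]; ring] at this
    exact this
  · rcases eq_or_lt_of_le hi with hiN | hiN
    · subst hiN
      have := htop
      rw [show QN3 a i (fun n => cN n t) i + QN4 a i (fun n => cN n t) i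
          = QN1 a i (fun n => cN n t) i + QN2 a i (fun n => cN n t) i +
            QN3 a i (fun n => cN n t) i + QN4 a i (fun n => cN n t) i by
        rw [QN1_top, QN2_top]; ring] at this
      exact this
    · exact hmid i hi1 (by omega)

lemma moment_hasDeriv {a : ℕ → ℕ → ℕ → ℝ} {N : ℕ} {cN : ℕ → ℝ → ℝ}
    (h : IsTruncSolIso a N (Set.Ici 0) cN) (w : ℕ → ℝ) {t : ℝ} (ht : 0 ≤ t) :
    HasDerivAt (fun s => ∑ i ∈ range (N+1), w i * cN i s)
      (∑ k ∈ Icc 1 N, ∑ p ∈ Icc k N, ∑ j ∈ Icc 0 (N-k),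
        a p j k * cN p t * cN j t * (w (p-k) + w (j+k) - w p - w j)) t := by
  rw [← key_identity a w N (fun n => cN n t)]
  exact HasDerivAt.fun_sum fun i hi =>
    (trunc_deriv_all h ht (Nat.lt_succ_iff.mp (Finset.mem_range.mp hi))).const_mul
      (w i)

lemma trunc_conserv {a : ℕ → ℕ → ℕ → ℝ} {N : ℕ} {cN : ℕ → ℝ → ℝ}
    (h : IsTruncSolIso a N (Set.Ici 0) cN) (w : ℕ → ℝ)
    (hw : ∀ k p j : ℕ, 1 ≤ k → k ≤ p → w (p-k) + w (j+k) - w p - w j = 0)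
    {t : ℝ} (ht : 0 ≤ t) :
    ∑ i ∈ range (N+1), w i * cN i t = ∑ i ∈ range (N+1), w i * cN i 0 := by
  have hder : ∀ x ∈ Set.Icc (0:ℝ) t,
      HasDerivAt (fun s => ∑ i ∈ range (N+1), w i * cN i s) 0 x := by
    intro x hx
    have hd := moment_hasDeriv h w hx.1
    have hzero : (∑ k ∈ Icc 1 N, ∑ p ∈ Icc k N, ∑ j ∈ Icc 0 (N-k),
        a p j k * cN p x * cN j x * (w (p-k) + w (j+k) - w p - w j)) = 0 := by
      apply Finset.sum_eq_zero; intro k hk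
      apply Finset.sum_eq_zero; intro p hp
      apply Finset.sum_eq_zero; intro j hj
      rw [hw k p j (Finset.mem_Icc.mp hk).1 (Finset.mem_Icc.mp hp).1, mul_zero]
    rwa [hzero] at hd
  have hcont : ContinuousOn (fun s => ∑ i ∈ range (N+1), w i * cN i s) (Set.Icc 0 t) :=
    fun x hx => ((hder x hx).continuousAt).continuousWithinAt
  exact constant_of_has_deriv_right_zero hcont
    (fun x hx => ((hder x (Set.mem_Icc_of_Ico hx)).hasDerivWithinAt)) t
    (Set.right_mem_Icc.mpr ht)

lemma gronwall_aux {K : ℝ} (hK : 0 ≤ K) (F D : ℝ → ℝ) {t : ℝ} (ht : 0 ≤ t)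
    (hF : ∀ s ∈ Set.Icc 0 t, HasDerivAt F (D s) s)
    (hD : ∀ s ∈ Set.Icc 0 t, D s ≤ K * F s) :
    F t ≤ F 0 * Real.exp (K*t) := by
  rcases eq_or_lt_of_le ht with rfl | ht'
  · simp
  set φ := fun s : ℝ => F s * Real.exp (-K*s) with hφdef
  have hφd : ∀ s ∈ Set.Icc (0:ℝ) t,
      HasDerivAt φ (D s * Real.exp (-K*s) + F s * (Real.exp (-K*s) * (-K))) s := by
    intro s hs
    have he : HasDerivAt (fun x : ℝ => Real.exp (-K*x)) (Real.exp (-K*s) * (-K)) s := by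
      simpa using ((hasDerivAt_id s).const_mul (-K)).exp
    exact (hF s hs).mul he
  have hanti : AntitoneOn φ (Set.Icc 0 t) := by
    apply antitoneOn_of_deriv_nonpos (convex_Icc 0 t)
    · exact fun s hs => ((hφd s hs).continuousAt).continuousWithinAt
    · intro s hs
      rw [interior_Icc] at hs
      exact ((hφd s (Set.mem_Icc_of_Ioo hs)).differentiableAt).differentiableWithinAt
    · intro s hs
      rw [interior_Icc] at hs
      rw [(hφd s (Set.mem_Icc_of_Ioo hs)).deriv]
      have h1 := hD s (Set.mem_Icc_of_Ioo hs)
      have h2 : (0:ℝ) < Real.exp (-K*s) := Real.exp_pos _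
      nlinarith
  have hle : φ t ≤ φ 0 :=
    hanti (Set.left_mem_Icc.mpr ht) (Set.right_mem_Icc.mpr ht) ht
  have h0 : φ 0 = F 0 := by simp [hφdef]
  have h2 : F t * Real.exp (-K*t) * Real.exp (K*t) ≤ F 0 * Real.exp (K*t) := by
    rw [← h0]
    exact mul_le_mul_of_nonneg_right hle (le_of_lt (Real.exp_pos _))
  rw [mul_assoc, ← Real.exp_add] at h2
  have : -K*t + K*t = 0 := by ring
  rwa [this, Real.exp_zero, mul_one] at h2

lemma master_limit
    (c0 : ℕ → ℝ) (cT : ℕ → ℝ) (Nm : ℕ → ℕ) (S : ℕ → ℕ → ℝ)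
    (w : ℕ → ℝ) (hw : ∀ i, 0 ≤ w i)
    (hSnn : ∀ m i, i ≤ Nm m → 0 ≤ S m i)
    (hSM : StrictMono Nm)
    (hlim : ∀ i, Tendsto (fun m => S m i) atTop (nhds (cT i)))
    (hsumT : Summable (fun i => w i * cT i))
    (hsum0 : Summable (fun i => w i * c0 i))
    (hcons : ∀ m, ∑ i ∈ range (Nm m + 1), w i * S m i = ∑ i ∈ range (Nm m + 1), w i * c0 i)
    (δ : ℕ → ℝ) (hδ : Tendsto δ atTop (nhds 0))
    (htail : ∀ R m, 1 ≤ R → R ≤ Nm m →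
      ∑ i ∈ Finset.Ico (R+1) (Nm m + 1), w i * S m i ≤ δ R) :
    ∑' i, w i * cT i = ∑' i, w i * c0 i := by
  set W0 := ∑' i, w i * c0 i with hW0
  set T := ∑' i, w i * cT i with hT
  have hkey : ∀ R : ℕ, 1 ≤ R →
      0 ≤ W0 - ∑ i ∈ range (R+1), w i * cT i ∧
        W0 - ∑ i ∈ range (R+1), w i * cT i ≤ δ R := by
    intro R hR
    have hA : Tendsto (fun m => ∑ i ∈ range (Nm m + 1), w i * c0 i) atTop (nhds W0) :=
      (hsum0.hasSum.tendsto_sum_nat).comp ((tendsto_add_atTop_nat 1).comp hSM.tendsto_atTop)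
    have hB : Tendsto (fun m => ∑ i ∈ range (R+1), w i * S m i) atTop
        (nhds (∑ i ∈ range (R+1), w i * cT i)) :=
      tendsto_finset_sum _ fun i _ => (hlim i).const_mul (w i)
    have hAB := hA.sub hB
    have hev : ∀ m, R ≤ m →
        ((∑ i ∈ range (Nm m + 1), w i * c0 i) - ∑ i ∈ range (R+1), w i * S m i
          = ∑ i ∈ Finset.Ico (R+1) (Nm m + 1), w i * S m i) := by
      intro m hm
      have hRN : R ≤ Nm m := le_trans hm hSM.le_apply
      rw [← hcons m, ← Finset.sum_range_add_sum_Ico _ (by omega : R+1 ≤ Nm m + 1)]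
      ring
    have hnn : ∀ m, 0 ≤ ∑ i ∈ Finset.Ico (R+1) (Nm m + 1), w i * S m i := by
      intro m
      apply Finset.sum_nonneg; intro i hi
      have h2 := Finset.mem_Ico.mp hi
      exact mul_nonneg (hw i) (hSnn m i (by omega))
    constructor
    · apply ge_of_tendsto hAB
      filter_upwards [eventually_ge_atTop R] with m hm
      rw [hev m hm]; exact hnn m
    · apply le_of_tendsto hAB
      filter_upwards [eventually_ge_atTop R] with m hm
      rw [hev m hm]
      exact htail R m hR (le_trans hm hSM.le_apply)
  have hS : Tendsto (fun R => ∑ i ∈ range (R+1), w i * cT i) atTop (nhds T) :=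
    (hsumT.hasSum.tendsto_sum_nat).comp (tendsto_add_atTop_nat 1)
  have hd : Tendsto (fun R => W0 - ∑ i ∈ range (R+1), w i * cT i) atTop (nhds (W0 - T)) :=
    tendsto_const_nhds.sub hS
  have h0' : Tendsto (fun R => W0 - ∑ i ∈ range (R+1), w i * cT i) atTop (nhds 0) := by
    apply tendsto_of_tendsto_of_tendsto_of_le_of_le' tendsto_const_nhds hδ
    · filter_upwards [eventually_ge_atTop 1] with R hR
      exact (hkey R hR).1
    · filter_upwards [eventually_ge_atTop 1] with R hR
      exact (hkey R hR).2
  have := tendsto_nhds_unique hd h0'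
  linarith

lemma tail_num (N R : ℕ) (d : ℕ → ℝ) (hd : ∀ i, 0 ≤ d i) (Mb : ℝ)
    (hM : ∑ i ∈ range (N+1), (i:ℝ) * d i ≤ Mb) :
    ∑ i ∈ Finset.Ico (R+1) (N+1), d i ≤ Mb / ((R:ℝ)+1) := by
  have hpos : (0:ℝ) < (R:ℝ)+1 := by positivity
  rw [le_div_iff₀ hpos]
  calc (∑ i ∈ Finset.Ico (R+1) (N+1), d i) * ((R:ℝ)+1)
      = ∑ i ∈ Finset.Ico (R+1) (N+1), d i * ((R:ℝ)+1) := by rw [Finset.sum_mul]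
    _ ≤ ∑ i ∈ Finset.Ico (R+1) (N+1), (i:ℝ) * d i := by
        apply Finset.sum_le_sum; intro i hi
        have h1 : R+1 ≤ i := (Finset.mem_Ico.mp hi).1
        have h2 : ((R:ℝ)+1) ≤ (i:ℝ) := by exact_mod_cast h1
        nlinarith [hd i]
    _ ≤ ∑ i ∈ range (N+1), (i:ℝ) * d i := by
        apply Finset.sum_le_sum_of_subset_of_nonneg
        · intro x hx; simp only [Finset.mem_Ico, Finset.mem_range] at *; omega
        · intro i _ _; exact mul_nonneg (by positivity) (hd i)
    _ ≤ Mb := hM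

lemma tail_mass (N R : ℕ) (hR : 1 ≤ R) (d : ℕ → ℝ) (hd : ∀ i, 0 ≤ d i) (B : ℝ)
    (hF : ∑ i ∈ range (N+1), gP (R:ℝ) (i:ℝ) * d i ≤ B) :
    ∑ i ∈ Finset.Ico (R+1) (N+1), (i:ℝ) * d i ≤ B / (R:ℝ) := by
  have hpos : (0:ℝ) < (R:ℝ) := by exact_mod_cast hR
  rw [le_div_iff₀ hpos]
  calc (∑ i ∈ Finset.Ico (R+1) (N+1), (i:ℝ) * d i) * (R:ℝ)
      = ∑ i ∈ Finset.Ico (R+1) (N+1), ((R:ℝ) * (i:ℝ)) * d i := by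
        rw [Finset.sum_mul]; exact Finset.sum_congr rfl fun i _ => by ring
    _ ≤ ∑ i ∈ Finset.Ico (R+1) (N+1), gP (R:ℝ) (i:ℝ) * d i := by
        apply Finset.sum_le_sum; intro i hi
        have h1 : R+1 ≤ i := (Finset.mem_Ico.mp hi).1
        have h2 : (R:ℝ) ≤ (i:ℝ) := by exact_mod_cast (by omega : R ≤ i)
        exact mul_le_mul_of_nonneg_right (gP_ge (le_of_lt hpos) h2) (hd i)
    _ ≤ ∑ i ∈ range (N+1), gP (R:ℝ) (i:ℝ) * d i := by
        apply Finset.sum_le_sum_of_subset_of_nonneg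
        · intro x hx; simp only [Finset.mem_Ico, Finset.mem_range] at *; omega
        · intro i _ _
          exact mul_nonneg (gP_nonneg (le_of_lt hpos) (by positivity)) (hd i)
    _ ≤ B := hF

lemma delta2_tendsto (c0 : ℕ → ℝ) (hc0 : ∀ i, 0 ≤ c0 i)
    (hsum : Summable (fun i : ℕ => (i:ℝ)*c0 i)) :
    Tendsto (fun R : ℕ => (∑' i : ℕ, (i:ℝ) * min (R:ℝ) (i:ℝ) * c0 i) / (R:ℝ))
      atTop (nhds 0) := by
  have hrw : ∀ R : ℕ, (∑' i : ℕ, (i:ℝ) * min (R:ℝ) (i:ℝ) * c0 i) / (R:ℝ)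
      = ∑' i : ℕ, ((i:ℝ) * min (R:ℝ) (i:ℝ) * c0 i) / (R:ℝ) := fun R => by
    rw [tsum_div_const]
  simp only [hrw]
  have h := tendsto_tsum_of_dominated_convergence (𝓕 := (atTop : Filter ℕ))
    (f := fun (R i : ℕ) => ((i:ℝ) * min (R:ℝ) (i:ℝ) * c0 i) / (R:ℝ))
    (g := fun _ : ℕ => (0:ℝ)) (bound := fun i => (i:ℝ)*c0 i) hsum ?_ ?_
  · simpa using h
  · intro i
    have hev : (fun R : ℕ => ((i:ℝ) * (i:ℝ) * c0 i) / (R:ℝ))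
        =ᶠ[atTop] fun R : ℕ => ((i:ℝ) * min (R:ℝ) (i:ℝ) * c0 i) / (R:ℝ) := by
      filter_upwards [eventually_ge_atTop i] with R hR
      rw [min_eq_right (by exact_mod_cast hR : (i:ℝ) ≤ (R:ℝ))]
    exact (tendsto_const_div_atTop_nhds_zero_nat _).congr' hev
  · filter_upwards [eventually_ge_atTop 1] with R hR
    intro i
    have hRpos : (0:ℝ) < (R:ℝ) := by exact_mod_cast hR
    have hmin0 : (0:ℝ) ≤ min (R:ℝ) (i:ℝ) := le_min (le_of_lt hRpos) (by positivity)
    have hminR : min (R:ℝ) (i:ℝ) ≤ (R:ℝ) := min_le_left _ _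
    have hnum : (0:ℝ) ≤ (i:ℝ) * min (R:ℝ) (i:ℝ) * c0 i :=
      mul_nonneg (mul_nonneg (by positivity) hmin0) (hc0 i)
    rw [Real.norm_eq_abs, abs_of_nonneg (div_nonneg hnum (le_of_lt hRpos))]
    rw [div_le_iff₀ hRpos]
    nlinarith [hc0 i, mul_nonneg (Nat.cast_nonneg i : (0:ℝ) ≤ i) (hc0 i)]

end AuxConservation

/-- Theorem 5.2: admissible solutions of the isolated DGED system conserve the total
number of clusters and the total mass. -/
theorem admissible_isolated_conservation
    (a : ℕ → ℕ → ℕ → ℝ) (ha : ∀ i j k, 0 ≤ a i j k)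
    (hzero : ∀ p : ℕ, 1 ≤ p → a p 0 p = 0)
    (C Q : ℝ) (q : ℕ → ℕ → ℝ) (hGB : GB a C Q q)
    (c0 : ℕ → ℝ) (hc0 : ∀ i, 0 ≤ c0 i)
    (hX : Summable (fun i : ℕ => (1 + (i : ℝ)) * c0 i))
    (c : ℕ → ℝ → ℝ) (hc : MildSolIso a c0 (Set.Ici 0) c)
    (hadm : AdmissibleIso a c0 c) :
    ∀ t : ℝ, 0 ≤ t →
      (∑' i : ℕ, c i t) = (∑' i : ℕ, c0 i) ∧
      (∑' i : ℕ, (i : ℝ) * c i t) = (∑' i : ℕ, (i : ℝ) * c0 i) := by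
  classical
  obtain ⟨Nm, cN, hSM, hN2, hsol, hinit, hzero, hnng, hlim⟩ := hadm
  intro t ht
  have hC : (1:ℝ) ≤ C := hGB.1
  have hQ : (1:ℝ) ≤ Q := hGB.2.1
  have hC0 : (0:ℝ) ≤ C := by linarith
  have hQ0 : (0:ℝ) ≤ Q := by linarith
  -- summability of the weighted initial data
  have hsum0m : Summable (fun i : ℕ => (i:ℝ) * c0 i) := by
    apply Summable.of_nonneg_of_le (fun i => mul_nonneg (by positivity) (hc0 i)) _ hX
    intro i
    have h1 := hc0 i
    have h2 : (0:ℝ) ≤ (i:ℝ) := by positivity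
    nlinarith
  have hsum01 : Summable (fun i : ℕ => c0 i) := by
    apply Summable.of_nonneg_of_le hc0 _ hX
    intro i
    have h1 := hc0 i
    have h2 : (0:ℝ) ≤ (i:ℝ) := by positivity
    nlinarith
  have hct := hc.2.1 t (Set.mem_Ici.mpr ht)
  have hsumT1 : Summable (fun i : ℕ => c i t) := by
    apply Summable.of_nonneg_of_le hct.1 _ hct.2
    intro i
    have h1 := hct.1 i
    have h2 : (0:ℝ) ≤ (i:ℝ) := by positivity
    nlinarith
  have hsumTm : Summable (fun i : ℕ => (i:ℝ) * c i t) := by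
    apply Summable.of_nonneg_of_le (fun i => mul_nonneg (by positivity) (hct.1 i)) _ hct.2
    intro i
    have h1 := hct.1 i
    have h2 : (0:ℝ) ≤ (i:ℝ) := by positivity
    nlinarith
  set Mbar := ∑' i : ℕ, (i:ℝ) * c0 i with hMbardef
  have hMbar0 : 0 ≤ Mbar :=
    tsum_nonneg fun i => mul_nonneg (by positivity) (hc0 i)
  set K := 8*C*Q*Mbar with hKdef
  have hK0 : 0 ≤ K := by
    rw [hKdef]
    have : (0:ℝ) ≤ 8*C*Q := by nlinarith
    nlinarith
  -- nonnegativity of truncated solutions at every index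
  have hnnAll : ∀ m i (s : ℝ), 0 ≤ s → 0 ≤ cN m i s := by
    intro m i s hs
    rcases le_or_gt i (Nm m) with h | h
    · exact hnng m i h s hs
    · rw [hzero m i h s]
  -- conservation for truncated systems
  have hw1 : ∀ k p j : ℕ, 1 ≤ k → k ≤ p →
      (fun _ : ℕ => (1:ℝ)) (p-k) + (fun _ : ℕ => (1:ℝ)) (j+k)
        - (fun _ : ℕ => (1:ℝ)) p - (fun _ : ℕ => (1:ℝ)) j = 0 := by
    intro k p j _ _; norm_num
  have hwid : ∀ k p j : ℕ, 1 ≤ k → k ≤ p →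
      (fun n : ℕ => (n:ℝ)) (p-k) + (fun n : ℕ => (n:ℝ)) (j+k)
        - (fun n : ℕ => (n:ℝ)) p - (fun n : ℕ => (n:ℝ)) j = 0 := by
    intro k p j hk hkp
    simp only
    rw [Nat.cast_sub hkp]
    push_cast
    ring
  have hinit_sum : ∀ m (w : ℕ → ℝ), ∑ i ∈ range (Nm m + 1), w i * cN m i 0
      = ∑ i ∈ range (Nm m + 1), w i * c0 i := by
    intro m w
    apply Finset.sum_congr rfl
    intro i hi
    rw [hinit m i (Nat.lt_succ_iff.mp (Finset.mem_range.mp hi))]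
  have hconsMass : ∀ m (s : ℝ), 0 ≤ s → ∑ i ∈ range (Nm m + 1), (i:ℝ) * cN m i s
      = ∑ i ∈ range (Nm m + 1), (i:ℝ) * c0 i := by
    intro m s hs
    rw [trunc_conserv (hsol m) (fun n : ℕ => (n:ℝ)) hwid hs, hinit_sum m]
  have hconsNum : ∀ m (s : ℝ), 0 ≤ s → ∑ i ∈ range (Nm m + 1), (1:ℝ) * cN m i s
      = ∑ i ∈ range (Nm m + 1), (1:ℝ) * c0 i := by
    intro m s hs
    rw [trunc_conserv (hsol m) (fun _ : ℕ => (1:ℝ)) hw1 hs, hinit_sum m]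
  have hMb : ∀ m (s : ℝ), 0 ≤ s → ∑ i ∈ range (Nm m + 1), (i:ℝ) * cN m i s ≤ Mbar := by
    intro m s hs
    rw [hconsMass m s hs]
    exact Summable.sum_le_tsum _ (fun i _ => mul_nonneg (by positivity) (hc0 i)) hsum0m
  -- Gronwall bound on the convex moment of the truncated solutions
  have hFR : ∀ m (R : ℕ), 1 ≤ R → ∀ s : ℝ, 0 ≤ s →
      ∑ i ∈ range (Nm m + 1), gP (R:ℝ) (i:ℝ) * cN m i s
        ≤ (∑ i ∈ range (Nm m + 1), gP (R:ℝ) (i:ℝ) * c0 i) * Real.exp (K*s) := by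
    intro m R hR s hs
    have hR1 : (1:ℝ) ≤ (R:ℝ) := by exact_mod_cast hR
    have hR0 : (0:ℝ) ≤ (R:ℝ) := by linarith
    have hgr := gronwall_aux hK0
      (fun u => ∑ i ∈ range (Nm m + 1), gP (R:ℝ) (i:ℝ) * cN m i u)
      (fun u => ∑ k ∈ Icc 1 (Nm m), ∑ p ∈ Icc k (Nm m), ∑ j ∈ Icc 0 (Nm m - k),
        a p j k * cN m p u * cN m j u *
          (gP (R:ℝ) ((p-k : ℕ):ℝ) + gP (R:ℝ) ((j+k : ℕ):ℝ)
            - gP (R:ℝ) (p:ℝ) - gP (R:ℝ) (j:ℝ))) hs ?_ ?_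
    · calc ∑ i ∈ range (Nm m + 1), gP (R:ℝ) (i:ℝ) * cN m i s
          ≤ (∑ i ∈ range (Nm m + 1), gP (R:ℝ) (i:ℝ) * cN m i 0) * Real.exp (K*s) := hgr
        _ = (∑ i ∈ range (Nm m + 1), gP (R:ℝ) (i:ℝ) * c0 i) * Real.exp (K*s) := by
            rw [hinit_sum m (fun n : ℕ => gP (R:ℝ) (n:ℝ))]
    · intro u hu
      exact moment_hasDeriv (hsol m) (fun n : ℕ => gP (R:ℝ) (n:ℝ)) hu.1
    · intro u hu
      have hcore := core_est a ha hGB (Nm m) (R:ℝ) hR1 (fun n => cN m n u)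
        (fun i => hnnAll m i u hu.1)
      rw [hIccRange (Nm m)] at hcore
      have hFnn : 0 ≤ ∑ i ∈ range (Nm m + 1), gP (R:ℝ) (i:ℝ) * cN m i u :=
        Finset.sum_nonneg fun i _ =>
          mul_nonneg (gP_nonneg hR0 (by positivity)) (hnnAll m i u hu.1)
      have hMle := hMb m u hu.1
      have h8 : (0:ℝ) ≤ 8*C*Q := by nlinarith
      calc (∑ k ∈ Icc 1 (Nm m), ∑ p ∈ Icc k (Nm m), ∑ j ∈ Icc 0 (Nm m - k),
            a p j k * cN m p u * cN m j u *
              (gP (R:ℝ) ((p-k : ℕ):ℝ) + gP (R:ℝ) ((j+k : ℕ):ℝ)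
                - gP (R:ℝ) (p:ℝ) - gP (R:ℝ) (j:ℝ)))
          ≤ 8*C*Q*(∑ i ∈ range (Nm m + 1), (i:ℝ) * cN m i u)
              * (∑ i ∈ range (Nm m + 1), gP (R:ℝ) (i:ℝ) * cN m i u) := hcore
        _ ≤ K * (∑ i ∈ range (Nm m + 1), gP (R:ℝ) (i:ℝ) * cN m i u) := by
            rw [hKdef]
            nlinarith [mul_le_mul_of_nonneg_right
              (mul_le_mul_of_nonneg_left hMle h8) hFnn]
  -- tail bounds
  have htail1 : ∀ (R m : ℕ), 1 ≤ R → R ≤ Nm m →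
      ∑ i ∈ Finset.Ico (R+1) (Nm m + 1), (1:ℝ) * cN m i t ≤ Mbar / ((R:ℝ)+1) := by
    intro R m hR hRN
    have h := tail_num (Nm m) R (fun i => cN m i t) (fun i => hnnAll m i t ht)
      Mbar (hMb m t ht)
    simpa [one_mul] using h
  have hγs : ∀ R : ℕ, Summable (fun i : ℕ => (i:ℝ) * min (R:ℝ) (i:ℝ) * c0 i) := by
    intro R
    apply Summable.of_nonneg_of_le
      (fun i => mul_nonneg (mul_nonneg (by positivity)
        (le_min (by positivity) (by positivity))) (hc0 i))
      _ (hsum0m.mul_left (R:ℝ))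
    intro i
    have h1 : min (R:ℝ) (i:ℝ) ≤ (R:ℝ) := min_le_left _ _
    have h2 := hc0 i
    have h3 : (0:ℝ) ≤ (i:ℝ) := by positivity
    nlinarith [mul_nonneg h3 h2]
  set γ : ℕ → ℝ := fun R => ∑' i : ℕ, (i:ℝ) * min (R:ℝ) (i:ℝ) * c0 i with hγdef
  have hF0le : ∀ m (R : ℕ), 1 ≤ R →
      ∑ i ∈ range (Nm m + 1), gP (R:ℝ) (i:ℝ) * c0 i ≤ 2 * γ R := by
    intro m R hR
    have hR0 : (0:ℝ) ≤ (R:ℝ) := by positivity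
    calc ∑ i ∈ range (Nm m + 1), gP (R:ℝ) (i:ℝ) * c0 i
        ≤ ∑ i ∈ range (Nm m + 1), 2 * ((i:ℝ) * min (R:ℝ) (i:ℝ)) * c0 i :=
          Finset.sum_le_sum fun i _ =>
            mul_le_mul_of_nonneg_right (gP_upper hR0 (by positivity)) (hc0 i)
      _ = 2 * ∑ i ∈ range (Nm m + 1), (i:ℝ) * min (R:ℝ) (i:ℝ) * c0 i := by
          rw [Finset.mul_sum]
          exact Finset.sum_congr rfl fun i _ => by ring
      _ ≤ 2 * γ R := by
          have h := Summable.sum_le_tsum (range (Nm m + 1))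
            (fun i _ => mul_nonneg (mul_nonneg (by positivity)
              (le_min hR0 (by positivity))) (hc0 i)) (hγs R)
          rw [hγdef]
          linarith
  have htailm : ∀ (R m : ℕ), 1 ≤ R → R ≤ Nm m →
      ∑ i ∈ Finset.Ico (R+1) (Nm m + 1), (i:ℝ) * cN m i t
        ≤ (2 * γ R * Real.exp (K*t)) / (R:ℝ) := by
    intro R m hR hRN
    apply tail_mass (Nm m) R hR (fun i => cN m i t) (fun i => hnnAll m i t ht)
    calc ∑ i ∈ range (Nm m + 1), gP (R:ℝ) (i:ℝ) * cN m i t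
        ≤ (∑ i ∈ range (Nm m + 1), gP (R:ℝ) (i:ℝ) * c0 i) * Real.exp (K*t) :=
          hFR m R hR t ht
      _ ≤ 2 * γ R * Real.exp (K*t) :=
          mul_le_mul_of_nonneg_right (hF0le m R hR) (le_of_lt (Real.exp_pos _))
  -- the two bounds tend to zero
  have hδ1 : Filter.Tendsto (fun R : ℕ => Mbar / ((R:ℝ)+1)) Filter.atTop (nhds 0) := by
    have h := tendsto_one_div_add_atTop_nhds_zero_nat.const_mul Mbar
    rw [mul_zero] at h
    refine h.congr fun R => ?_
    rw [mul_one_div]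
  have hδm : Filter.Tendsto (fun R : ℕ => (2 * γ R * Real.exp (K*t)) / (R:ℝ))
      Filter.atTop (nhds 0) := by
    have h := (delta2_tendsto c0 hc0 hsum0m).const_mul (2 * Real.exp (K*t))
    rw [mul_zero] at h
    refine h.congr fun R => ?_
    rw [hγdef]
    ring
  -- pass to the limit
  constructor
  · have h := master_limit c0 (fun i => c i t) Nm (fun m i => cN m i t)
      (fun _ : ℕ => (1:ℝ)) (fun _ => zero_le_one) (fun m i hi => hnng m i hi t ht)
      hSM (fun i => hlim i t ht)
      (by simpa [one_mul] using hsumT1) (by simpa [one_mul] using hsum01)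
      (fun m => hconsNum m t ht) _ hδ1 (fun R m hR hRN => htail1 R m hR hRN)
    calc ∑' i : ℕ, c i t = ∑' i : ℕ, (1:ℝ) * c i t := by simp [one_mul]
      _ = ∑' i : ℕ, (1:ℝ) * c0 i := h
      _ = ∑' i : ℕ, c0 i := by simp [one_mul]
  · exact master_limit c0 (fun i => c i t) Nm (fun m i => cN m i t)
      (fun n : ℕ => (n:ℝ)) (fun n => by positivity) (fun m i hi => hnng m i hi t ht)
      hSM (fun i => hlim i t ht) hsumTm hsum0m
      (fun m => hconsMass m t ht) _ hδm (fun R m hR hRN => htailm R m hR hRN)
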